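/- Fix a completely positive map T : Mat_n(ℂ) → Mat_m(ℂ). The function f(p, q) = e^{H(p)} · cap(T, diag(p), diag(q)), defined on pairs of nonincreasing nonnegative vectors p ∈ ℝ^n, q ∈ ℝ^m, is log-concave: for all such pairs (p, q), (p′, q′) and all λ ∈ [0,1], f(λp + (1−λ)p′, λq + (1−λ)q′) ≥ f(p, q)^λ · f(p′, q′)^{1−λ}. -/

import Mathlib

open Matrix BigOperators

noncomputable section

/-- `η_j` : the projection onto the first `j` coordinates, as a `j × k` matrix. -/
def proj (j k : ℕ) : Matrix (Fin j) (Fin k) ℂ :=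
  Matrix.of fun i l => if (i : ℕ) = (l : ℕ) then 1 else 0

/-- `Δa_j = a_j − a_{j+1}`, with the convention `a_{k+1} = 0`. -/
def delta {k : ℕ} (a : Fin k → ℝ) (j : Fin k) : ℝ :=
  a j - (if h : (j : ℕ) + 1 < k then a ⟨(j : ℕ) + 1, h⟩ else 0)

/-- Integer version of `delta`. -/
def deltaNat {k : ℕ} (a : Fin k → ℕ) (j : Fin k) : ℕ :=
  a j - (if h : (j : ℕ) + 1 < k then a ⟨(j : ℕ) + 1, h⟩ else 0)

/-- The relative determinant `det(diag a, X) = ∏_j det(η_j X η_j†)^{Δa_j}` (real exponents,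
with the convention `0 ^ 0 = 1`). -/
def relDet {k : ℕ} (a : Fin k → ℝ) (X : Matrix (Fin k) (Fin k) ℂ) : ℝ :=
  ∏ j : Fin k,
    ((proj ((j : ℕ) + 1) k * X * (proj ((j : ℕ) + 1) k)ᴴ).det.re) ^ (delta a j)

/-- Complex relative determinant for integral weights. -/
def relDetC {k : ℕ} (a : Fin k → ℕ) (X : Matrix (Fin k) (Fin k) ℂ) : ℂ :=
  ∏ j : Fin k,
    ((proj ((j : ℕ) + 1) k * X * (proj ((j : ℕ) + 1) k)ᴴ).det) ^ (deltaNat a j)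

/-- The completely positive map `T(X) = Σ A_i X A_i†` with Kraus operators `A i`. -/
def cpMap {ι κ : Type*} [Fintype ι] {r : ℕ} (A : Fin r → Matrix κ ι ℂ)
    (X : Matrix ι ι ℂ) : Matrix κ κ ℂ :=
  ∑ i, A i * X * (A i)ᴴ

/-- The dual completely positive map `T*(Y) = Σ A_i† Y A_i`. -/
def cpDual {ι κ : Type*} [Fintype κ] {r : ℕ} (A : Fin r → Matrix κ ι ℂ)
    (Y : Matrix κ κ ℂ) : Matrix ι ι ℂ :=
  ∑ i, (A i)ᴴ * Y * A i

/-- Frobenius norm `‖A‖ = √(Tr A Aᴴ)`. -/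
def frob {ι κ : Type*} [Fintype ι] [Fintype κ] (A : Matrix ι κ ℂ) : ℝ :=
  Real.sqrt (A * Aᴴ).trace.re

/-- Upper triangular predicate. -/
def UT {k : ℕ} (g : Matrix (Fin k) (Fin k) ℂ) : Prop :=
  ∀ i j : Fin k, j < i → g i j = 0

/-- Capacity with specified marginals:
`cap(T,P,Q) = inf over invertible upper triangular h of det(Q, T(hPh†)) / det(P, h†h)`. -/
def cap {n m r : ℕ} (A : Fin r → Matrix (Fin m) (Fin n) ℂ)
    (p : Fin n → ℝ) (q : Fin m → ℝ) : ℝ :=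
  sInf { x : ℝ | ∃ h : Matrix (Fin n) (Fin n) ℂ, IsUnit h.det ∧ UT h ∧
    x = relDet q (cpMap A (h * Matrix.diagonal (fun j => (p j : ℂ)) * hᴴ)) /
        relDet p (hᴴ * h) }

/-- Span of the first `i` standard basis vectors of `ℂ^k`. -/
def coordSub (k i : ℕ) : Submodule ℂ (Fin k → ℂ) where
  carrier := { x | ∀ l : Fin k, i ≤ (l : ℕ) → x l = 0 }
  add_mem' := by intro a b ha hb l hl; simp [ha l hl, hb l hl]
  zero_mem' := by intro l _; rfl
  smul_mem' := by intro c x hx l hl; simp [hx l hl]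

/-- `(L, R)` is a `T`-independent pair: `A_i R ⊥ L` for all `i`. -/
def TIndep {n m r : ℕ} (A : Fin r → Matrix (Fin m) (Fin n) ℂ)
    (L : Submodule ℂ (Fin m → ℂ)) (R : Submodule ℂ (Fin n → ℂ)) : Prop :=
  ∀ i : Fin r, ∀ x ∈ R, ∀ y ∈ L, star y ⬝ᵥ (A i).mulVec x = 0

/-- `(P,Q)`-rank-nondecreasingness. -/
def rankNonDec {n m r : ℕ} (A : Fin r → Matrix (Fin m) (Fin n) ℂ)
    (p : Fin n → ℝ) (q : Fin m → ℝ) : Prop :=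
  ∀ L : Submodule ℂ (Fin m → ℂ), ∀ R : Submodule ℂ (Fin n → ℂ), TIndep A L R →
    (∑ i : Fin m, delta q i * (Module.finrank ℂ ↥(coordSub m ((i : ℕ) + 1) ⊓ L) : ℝ)) +
      (∑ j : Fin n, delta p j * (Module.finrank ℂ ↥(coordSub n ((j : ℕ) + 1) ⊓ R) : ℝ))
      ≤ ∑ j, p j

/-- `λ'_{i+1}`: number of parts of `lam` that are `> i` (0-indexed conjugate partition). -/
def conj' {k : ℕ} (lam : Fin k → ℕ) (i : ℕ) : ℕ :=
  (Finset.univ.filter fun j : Fin k => i < lam j).card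

lemma conj'_le {k : ℕ} (lam : Fin k → ℕ) (i : ℕ) : conj' lam i ≤ k := by
  classical
  calc conj' lam i ≤ Finset.univ.card := Finset.card_filter_le _ _
    _ = k := by simp

/-- Index set for the blocks of `G_λ`; it has cardinality `Σ_i λ'_i = Σ_j λ_j`. -/
abbrev lamIdx {k : ℕ} (lam : Fin k → ℕ) : Type :=
  Σ i : Fin (Finset.univ.sup lam), Fin (conj' lam (i : ℕ))

/-- The gadget map `G_λ(X) = ⊕_{i=1}^{λ_1} η_{λ'_i} X η_{λ'_i}†`. -/
def Gmap {k : ℕ} (lam : Fin k → ℕ) (X : Matrix (Fin k) (Fin k) ℂ) :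
    Matrix (lamIdx lam) (lamIdx lam) ℂ := fun s t =>
  if s.1 = t.1 then
    X (Fin.castLE (conj'_le lam (s.1 : ℕ)) s.2) (Fin.castLE (conj'_le lam (t.1 : ℕ)) t.2)
  else 0

/-- The adjoint `G_λ*` of the gadget map with respect to the trace inner product. -/
def GmapAdj {k : ℕ} (lam : Fin k → ℕ) (Y : Matrix (lamIdx lam) (lamIdx lam) ℂ) :
    Matrix (Fin k) (Fin k) ℂ := fun a b =>
  ∑ i : Fin (Finset.univ.sup lam),
    if h : (a : ℕ) < conj' lam (i : ℕ) ∧ (b : ℕ) < conj' lam (i : ℕ) then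
      Y ⟨i, ⟨(a : ℕ), h.1⟩⟩ ⟨i, ⟨(b : ℕ), h.2⟩⟩
    else 0

/-- The reduction `trun_{P,Q} T = G_q ∘ T ∘ G_p*`. -/
def trun {n m r : ℕ} (A : Fin r → Matrix (Fin m) (Fin n) ℂ) (p : Fin n → ℕ) (q : Fin m → ℕ)
    (X : Matrix (lamIdx p) (lamIdx p) ℂ) : Matrix (lamIdx q) (lamIdx q) ℂ :=
  Gmap q (cpMap A (GmapAdj p X))

/-- The dual of the reduction: `(trun_{P,Q} T)* = G_p ∘ T* ∘ G_q*`. -/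
def trunDual {n m r : ℕ} (A : Fin r → Matrix (Fin m) (Fin n) ℂ) (p : Fin n → ℕ) (q : Fin m → ℕ)
    (Y : Matrix (lamIdx q) (lamIdx q) ℂ) : Matrix (lamIdx p) (lamIdx p) ℂ :=
  Gmap p (cpDual A (GmapAdj q Y))

/-- Shannon entropy with convention `0 · log 0 = 0` (note `Real.log 0 = 0`). -/
def entropy {k : ℕ} (p : Fin k → ℝ) : ℝ := -∑ j, p j * Real.log (p j)

/-- The distance-to-target measure `ds_{P,Q}(T)`. -/
def ds {n m r : ℕ} (A : Fin r → Matrix (Fin m) (Fin n) ℂ)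
    (p : Fin n → ℝ) (q : Fin m → ℝ) : ℝ :=
  (∑ j : Fin n, delta p j *
      (frob (proj ((j : ℕ) + 1) n *
        (cpDual A (Matrix.diagonal fun i => (q i : ℂ)) - 1) * (proj ((j : ℕ) + 1) n)ᴴ)) ^ 2) +
    ∑ i : Fin m, delta q i *
      (frob (proj ((i : ℕ) + 1) m *
        (cpMap A (Matrix.diagonal fun j => (p j : ℂ)) - 1) * (proj ((i : ℕ) + 1) m)ᴴ)) ^ 2

/-- `(u_1,…,u_n)` can be approximately put in `Q`-isotropic position with respect to `p`. -/
def approxIso {m n : ℕ} (u : Fin n → Fin m → ℂ) (p : Fin n → ℝ)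
    (Q : Matrix (Fin m) (Fin m) ℂ) : Prop :=
  ∀ ε : ℝ, 0 < ε → ∃ B : Matrix (Fin m) (Fin m) ℂ, IsUnit B.det ∧
    frob ((∑ i : Fin n,
      (((p i / ∑ a, Complex.normSq (B.mulVec (u i) a)) : ℝ) : ℂ) •
        Matrix.vecMulVec (B.mulVec (u i)) (star (B.mulVec (u i)))) - Q) ≤ ε

-- ===================== auxiliary development =====================

section Stmt15Aux

open Matrix Finset
open scoped ComplexOrder

/-! ### ℕ-padded sequences and Abel summation -/

private def padF {k : ℕ} (a : Fin k → ℝ) (d : ℝ) : ℕ → ℝ :=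
  fun i => if h : i < k then a ⟨i, h⟩ else d

private lemma padF_lt {k : ℕ} (a : Fin k → ℝ) (d : ℝ) {i : ℕ} (h : i < k) :
    padF a d i = a ⟨i, h⟩ := dif_pos h

private lemma padF_ge {k : ℕ} (a : Fin k → ℝ) (d : ℝ) {i : ℕ} (h : ¬ i < k) :
    padF a d i = d := dif_neg h

private lemma delta_eq_padF {k : ℕ} (a : Fin k → ℝ) (j : Fin k) :
    delta a j = padF a 0 j.1 - padF a 0 (j.1 + 1) := by
  simp only [delta, padF]
  rw [dif_pos j.2]

private lemma sum_ite_delta {k : ℕ} (a : Fin k → ℝ) {i : ℕ} (hik : i < k) :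
    (∑ j : Fin k, if i ≤ (j : ℕ) then delta a j else 0) = a ⟨i, hik⟩ := by
  have step1 : (∑ j : Fin k, if i ≤ (j : ℕ) then delta a j else 0)
      = ∑ t ∈ Finset.range k, (if i ≤ t then padF a 0 t - padF a 0 (t + 1) else 0) := by
    rw [← Fin.sum_univ_eq_sum_range (fun t => if i ≤ t then padF a 0 t - padF a 0 (t + 1) else 0) k]
    refine Finset.sum_congr rfl fun j _ => ?_
    rw [delta_eq_padF]
  rw [step1]
  have step2 : (∑ t ∈ Finset.range k, (if i ≤ t then padF a 0 t - padF a 0 (t + 1) else 0))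
      = ∑ t ∈ Finset.Ico i k, (padF a 0 t - padF a 0 (t + 1)) := by
    rw [← Finset.sum_filter]
    congr 1
    ext t
    simp only [Finset.mem_filter, Finset.mem_range, Finset.mem_Ico]
    tauto
  rw [step2, Finset.sum_Ico_eq_sum_range]
  have step3 := Finset.sum_range_sub' (fun t => padF a 0 (i + t)) (k - i)
  simp only [← Nat.add_assoc] at step3
  rw [step3, Nat.add_zero, Nat.add_sub_cancel' hik.le, padF_ge a 0 (lt_irrefl k),
    padF_lt a 0 hik, sub_zero]

private lemma sum_weighted_delta {k : ℕ} (a : Fin k → ℝ) (L : ℕ → ℝ) :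
    (∑ j : Fin k, (∑ t ∈ Finset.range ((j : ℕ) + 1), L t) * delta a j)
      = ∑ l : Fin k, L (l : ℕ) * a l := by
  have inner : ∀ j : Fin k, (∑ t ∈ Finset.range ((j : ℕ) + 1), L t)
      = ∑ t ∈ Finset.range k, (if t ≤ (j : ℕ) then L t else 0) := by
    intro j
    rw [← Finset.sum_filter]
    congr 1
    ext t
    simp only [Finset.mem_range, Finset.mem_filter, Nat.lt_succ_iff]
    exact ⟨fun h => ⟨lt_of_le_of_lt h j.2, h⟩, fun h => h.2⟩
  calc (∑ j : Fin k, (∑ t ∈ Finset.range ((j : ℕ) + 1), L t) * delta a j)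
      = ∑ j : Fin k, ∑ t ∈ Finset.range k, (if t ≤ (j : ℕ) then L t * delta a j else 0) := by
        refine Finset.sum_congr rfl fun j _ => ?_
        rw [inner j, Finset.sum_mul]
        refine Finset.sum_congr rfl fun t _ => ?_
        split <;> simp
    _ = ∑ t ∈ Finset.range k, ∑ j : Fin k, (if t ≤ (j : ℕ) then L t * delta a j else 0) :=
        Finset.sum_comm
    _ = ∑ t ∈ Finset.range k, L t * (∑ j : Fin k, if t ≤ (j : ℕ) then delta a j else 0) := by
        refine Finset.sum_congr rfl fun t _ => ?_
        rw [Finset.mul_sum]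
        refine Finset.sum_congr rfl fun j _ => ?_
        split <;> simp
    _ = ∑ t ∈ Finset.range k, L t * padF a 0 t := by
        refine Finset.sum_congr rfl fun t ht => ?_
        rw [sum_ite_delta a (Finset.mem_range.mp ht), padF_lt a 0 (Finset.mem_range.mp ht)]
    _ = ∑ l : Fin k, L (l : ℕ) * a l := by
        rw [← Fin.sum_univ_eq_sum_range (fun t => L t * padF a 0 t) k]
        refine Finset.sum_congr rfl fun l _ => ?_
        rw [padF_lt a 0 l.2]

private lemma abel_prod {k : ℕ} (a w : Fin k → ℝ) (hw : ∀ l, 0 < w l) :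
    (∏ j : Fin k, (∏ t ∈ Finset.range ((j : ℕ) + 1), padF w 1 t) ^ (delta a j))
      = ∏ l : Fin k, w l ^ (a l) := by
  have hwp : ∀ t : ℕ, 0 < padF w 1 t := by
    intro t; unfold padF; split
    · exact hw _
    · exact one_pos
  calc (∏ j : Fin k, (∏ t ∈ Finset.range ((j : ℕ) + 1), padF w 1 t) ^ (delta a j))
      = Real.exp (∑ j : Fin k,
          (∑ t ∈ Finset.range ((j : ℕ) + 1), Real.log (padF w 1 t)) * delta a j) := by
        rw [Real.exp_sum]
        refine Finset.prod_congr rfl fun j _ => ?_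
        rw [Real.rpow_def_of_pos (Finset.prod_pos fun t _ => hwp t),
          Real.log_prod fun t _ => (hwp t).ne']
    _ = Real.exp (∑ l : Fin k, Real.log (padF w 1 (l : ℕ)) * a l) := by
        rw [sum_weighted_delta]
    _ = ∏ l : Fin k, w l ^ (a l) := by
        rw [Real.exp_sum]
        refine (Finset.prod_congr rfl fun l _ => ?_)
        rw [Real.rpow_def_of_pos (hw l), padF_lt w 1 l.2]

/-! ### projection/diagonal algebra -/

private lemma proj_apply' {j k : ℕ} (i : Fin j) (l : Fin k) :
    proj j k i l = if (i : ℕ) = (l : ℕ) then 1 else 0 := rfl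

private lemma projT_apply {j k : ℕ} (l : Fin k) (i : Fin j) :
    (proj j k)ᴴ l i = if (i : ℕ) = (l : ℕ) then 1 else 0 := by
  rw [Matrix.conjTranspose_apply, proj_apply']
  split <;> simp

private lemma proj_mul_diag {j k : ℕ} (hjk : j ≤ k) (v : Fin k → ℂ) :
    proj j k * Matrix.diagonal v
      = Matrix.diagonal (fun i : Fin j => v (Fin.castLE hjk i)) * proj j k := by
  ext i l
  rw [Matrix.mul_diagonal, Matrix.diagonal_mul]
  rcases eq_or_ne (i : ℕ) (l : ℕ) with h | h
  · have hc : Fin.castLE hjk i = l := Fin.ext (by simpa using h)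
    simp [proj, hc, h]
  · simp [proj, h]

private lemma diag_mul_projT {j k : ℕ} (hjk : j ≤ k) (v : Fin k → ℂ) :
    Matrix.diagonal v * (proj j k)ᴴ
      = (proj j k)ᴴ * Matrix.diagonal (fun i : Fin j => v (Fin.castLE hjk i)) := by
  ext l i
  rw [Matrix.diagonal_mul, Matrix.mul_diagonal]
  rcases eq_or_ne (i : ℕ) (l : ℕ) with h | h
  · have hc : Fin.castLE hjk i = l := Fin.ext (by simpa using h)
    simp [proj, Matrix.conjTranspose_apply, hc, h]
  · simp [proj, Matrix.conjTranspose_apply, h]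

private lemma corner_conj_diag {j k : ℕ} (hjk : j ≤ k) (M : Matrix (Fin k) (Fin k) ℂ)
    (v : Fin k → ℂ) :
    proj j k * (Matrix.diagonal v * M * Matrix.diagonal v) * (proj j k)ᴴ
      = Matrix.diagonal (fun i : Fin j => v (Fin.castLE hjk i))
          * (proj j k * M * (proj j k)ᴴ)
          * Matrix.diagonal (fun i : Fin j => v (Fin.castLE hjk i)) := by
  calc proj j k * (Matrix.diagonal v * M * Matrix.diagonal v) * (proj j k)ᴴ
      = (proj j k * Matrix.diagonal v) * (M * (Matrix.diagonal v * (proj j k)ᴴ)) := by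
        simp only [Matrix.mul_assoc]
    _ = _ := by
        rw [proj_mul_diag hjk, diag_mul_projT hjk]
        simp only [Matrix.mul_assoc]

private lemma det_diag_cast {j k : ℕ} (hjk : j ≤ k) (d : Fin k → ℝ) :
    (Matrix.diagonal (fun i : Fin j => ((d (Fin.castLE hjk i) : ℝ) : ℂ))).det
      = ((∏ t ∈ Finset.range j, padF d 1 t : ℝ) : ℂ) := by
  rw [Matrix.det_diagonal]
  have h1 : ∀ i : Fin j, ((d (Fin.castLE hjk i) : ℝ) : ℂ) = ((padF d 1 (i : ℕ) : ℝ) : ℂ) := by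
    intro i
    rw [padF_lt d 1 (lt_of_lt_of_le i.2 hjk)]
    rfl
  rw [Finset.prod_congr rfl fun i _ => h1 i, ← Complex.ofReal_prod,
    Fin.prod_univ_eq_prod_range (fun t => padF d 1 t) j]

private lemma det_re_corner_conj_diag {j k : ℕ} (hjk : j ≤ k) (M : Matrix (Fin k) (Fin k) ℂ)
    (d : Fin k → ℝ) :
    (proj j k * ((Matrix.diagonal fun l => (d l : ℂ)) * M * (Matrix.diagonal fun l => (d l : ℂ)))
        * (proj j k)ᴴ).det.re
      = (∏ t ∈ Finset.range j, padF d 1 t) ^ 2 * (proj j k * M * (proj j k)ᴴ).det.re := by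
  rw [corner_conj_diag hjk, Matrix.det_mul, Matrix.det_mul, det_diag_cast hjk]
  set c := ∏ t ∈ Finset.range j, padF d 1 t with hc
  set z := (proj j k * M * (proj j k)ᴴ).det with hz
  have h2 : (c : ℂ) * z * (c : ℂ) = ((c ^ 2 : ℝ) : ℂ) * z := by push_cast; ring
  rw [h2]
  simp [Complex.mul_re, ← Complex.ofReal_pow]

private lemma relDet_conj_diag {k : ℕ} (a d : Fin k → ℝ) (hd : ∀ l, 0 < d l)
    (M : Matrix (Fin k) (Fin k) ℂ)
    (hM : ∀ j : Fin k, 0 ≤ (proj ((j : ℕ) + 1) k * M * (proj ((j : ℕ) + 1) k)ᴴ).det.re) :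
    relDet a ((Matrix.diagonal fun l => (d l : ℂ)) * M * (Matrix.diagonal fun l => (d l : ℂ)))
      = (∏ l, (d l ^ 2) ^ (a l)) * relDet a M := by
  unfold relDet
  rw [← abel_prod a (fun l => d l ^ 2) (fun l => pow_pos (hd l) 2), ← Finset.prod_mul_distrib]
  refine Finset.prod_congr rfl fun j _ => ?_
  rw [det_re_corner_conj_diag j.2 M d, Real.mul_rpow (sq_nonneg _) (hM j)]
  congr 2
  rw [← Finset.prod_pow]
  refine Finset.prod_congr rfl fun t _ => ?_
  unfold padF; split <;> simp

/-! ### rpow combination lemmas -/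

private lemma rpow_combo {c a b t s : ℝ} (hc : 0 ≤ c) (ha : 0 ≤ a) (hb : 0 ≤ b)
    (ht : 0 < t) (hs : 0 < s) :
    c ^ (t * a + s * b) = (c ^ a) ^ t * (c ^ b) ^ s := by
  rcases hc.eq_or_lt with h0 | hc0
  · rw [← h0]
    rcases eq_or_ne a 0 with ha0 | ha0
    · rcases eq_or_ne b 0 with hb0 | hb0
      · simp [ha0, hb0]
      · rw [ha0, Real.rpow_zero, Real.one_rpow, one_mul, mul_zero, zero_add,
          Real.zero_rpow (mul_ne_zero hs.ne' hb0), Real.zero_rpow hb0,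
          Real.zero_rpow hs.ne']
    · have hpos : 0 < t * a + s * b :=
        add_pos_of_pos_of_nonneg (mul_pos ht (lt_of_le_of_ne ha (Ne.symm ha0)))
          (mul_nonneg hs.le hb)
      rw [Real.zero_rpow hpos.ne', Real.zero_rpow ha0, Real.zero_rpow ht.ne', zero_mul]
  · rw [Real.rpow_add hc0, mul_comm t a, mul_comm s b, Real.rpow_mul hc, Real.rpow_mul hc]

private lemma delta_nonneg' {k : ℕ} {a : Fin k → ℝ} (ha : Antitone a) (ha0 : ∀ l, 0 ≤ a l)
    (j : Fin k) : 0 ≤ delta a j := by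
  unfold delta
  split
  · rename_i hlt
    have h1 : a ⟨(j : ℕ) + 1, hlt⟩ ≤ a j := ha (by simp [Fin.le_def])
    linarith
  · have := ha0 j; linarith

private lemma delta_combo {k : ℕ} (a b : Fin k → ℝ) (t s : ℝ) (j : Fin k) :
    delta (fun l => t * a l + s * b l) j = t * delta a j + s * delta b j := by
  unfold delta
  rcases Nat.lt_or_ge ((j : ℕ) + 1) k with h | h
  · rw [dif_pos h, dif_pos h, dif_pos h]; ring
  · rw [dif_neg (not_lt.mpr h), dif_neg (not_lt.mpr h), dif_neg (not_lt.mpr h)]; ring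

/-! ### positive semidefinite facts -/

private lemma diag_real_psd {k : ℕ} (v : Fin k → ℝ) (hv : ∀ l, 0 ≤ v l) :
    (Matrix.diagonal fun l => (v l : ℂ)).PosSemidef :=
  Matrix.PosSemidef.diagonal (Pi.le_def.mpr fun l => by
    simpa using Complex.zero_le_real.mpr (hv l))

private lemma cpMap_add {ι κ : Type*} [Fintype ι] {r : ℕ} (A : Fin r → Matrix κ ι ℂ)
    (X Y : Matrix ι ι ℂ) : cpMap A (X + Y) = cpMap A X + cpMap A Y := by
  unfold cpMap
  rw [← Finset.sum_add_distrib]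
  refine Finset.sum_congr rfl fun i _ => ?_
  rw [Matrix.mul_add, Matrix.add_mul]

private lemma cpMap_psd {n m r : ℕ} (A : Fin r → Matrix (Fin m) (Fin n) ℂ)
    {X : Matrix (Fin n) (Fin n) ℂ} (hX : X.PosSemidef) : (cpMap A X).PosSemidef := by
  unfold cpMap
  refine Finset.sum_induction _ _ (fun a b ha hb => ha.add hb) Matrix.PosSemidef.zero ?_
  exact fun i _ => hX.mul_mul_conjTranspose_same (A i)

private lemma psd_det_re_eq {α : Type*} [Fintype α] [DecidableEq α] {M : Matrix α α ℂ}
    (hM : M.PosSemidef) : M.det = ((∏ i, hM.1.eigenvalues i : ℝ) : ℂ) := by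
  rw [hM.1.det_eq_prod_eigenvalues]
  norm_cast

private lemma psd_det_re_nonneg {α : Type*} [Fintype α] [DecidableEq α] {M : Matrix α α ℂ}
    (hM : M.PosSemidef) : 0 ≤ M.det.re := by
  rw [psd_det_re_eq hM, Complex.ofReal_re]
  exact Finset.prod_nonneg fun i _ => hM.eigenvalues_nonneg i

private lemma det_one_add_psd {α : Type*} [Fintype α] [DecidableEq α] {K : Matrix α α ℂ}
    (hK : K.PosSemidef) : ∃ u : ℝ, ((1 : Matrix α α ℂ) + K).det = (u : ℂ) ∧ 1 ≤ u := by
  refine ⟨∏ i, (1 + hK.1.eigenvalues i), ?_, ?_⟩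
  · set U : Matrix α α ℂ := (hK.1.eigenvectorUnitary : Matrix α α ℂ) with hU_def
    have hU : U * star U = 1 := (Matrix.mem_unitaryGroup_iff).mp hK.1.eigenvectorUnitary.2
    have hspec : K = U * Matrix.diagonal (RCLike.ofReal ∘ hK.1.eigenvalues) * star U :=
      hK.1.spectral_theorem
    have hone : (1 : Matrix α α ℂ) = U * 1 * star U := by rw [Matrix.mul_one, hU]
    have hsum : (1 : Matrix α α ℂ) + K
        = U * (1 + Matrix.diagonal (RCLike.ofReal ∘ hK.1.eigenvalues)) * star U := by
      rw [Matrix.mul_add, Matrix.add_mul, ← hspec, ← hone]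
    rw [hsum, Matrix.det_mul_right_comm, hU, Matrix.one_mul]
    rw [← Matrix.diagonal_one, Matrix.diagonal_add, Matrix.det_diagonal]
    have hco : (RCLike.ofReal : ℝ → ℂ) = ((↑) : ℝ → ℂ) := rfl
    simp only [Pi.add_apply, Function.comp_apply, hco]
    rw [Complex.ofReal_prod]
    refine Finset.prod_congr rfl fun x _ => by push_cast; ring
  · refine le_trans (le_of_eq (by simp : (1:ℝ) = ∏ _i : α, (1:ℝ)))
      (Finset.prod_le_prod (fun i _ => zero_le_one) fun i _ => ?_)
    linarith [hK.eigenvalues_nonneg i]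

open scoped MatrixOrder in
private lemma det_re_mono {α : Type*} [Fintype α] [DecidableEq α] {M P : Matrix α α ℂ}
    (hM : M.PosSemidef) (hP : P.PosSemidef) : M.det.re ≤ (M + P).det.re := by
  by_cases hc : M.det.re = 0
  · rw [hc]; exact psd_det_re_nonneg (hM.add hP)
  · have hMc : M.det = ((M.det.re : ℝ) : ℂ) := by
      rw [psd_det_re_eq hM, Complex.ofReal_re]
    set c := M.det.re with hc_def
    have hc0 : 0 ≤ c := psd_det_re_nonneg hM
    set S := CFC.sqrt M with hS_def
    have hSS : S * S = M := by exact CFC.sqrt_mul_sqrt_self M hM.nonneg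
    have hSpsd : S.PosSemidef := by exact (CFC.sqrt_nonneg M).posSemidef
    have hSdet : S.det ≠ 0 := by
      intro h
      apply hc
      have hMd : M.det = 0 := by rw [← hSS, Matrix.det_mul, h, zero_mul]
      rw [hc_def, hMd]; rfl
    have hSunit : IsUnit S.det := isUnit_iff_ne_zero.mpr hSdet
    have hSH : Sᴴ = S := hSpsd.1
    have hSinvH : (S⁻¹)ᴴ = S⁻¹ := by rw [Matrix.conjTranspose_nonsing_inv, hSH]
    have hKpsd : (S⁻¹ * P * S⁻¹).PosSemidef := by
      have := hP.mul_mul_conjTranspose_same S⁻¹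
      rwa [hSinvH] at this
    have hMP : M + P = S * (1 + S⁻¹ * P * S⁻¹) * S := by
      have h2 : S * (S⁻¹ * P * S⁻¹) * S = P := by
        calc S * (S⁻¹ * P * S⁻¹) * S
            = (S * S⁻¹) * P * (S⁻¹ * S) := by simp only [Matrix.mul_assoc]
          _ = P := by
              rw [Matrix.mul_nonsing_inv _ hSunit, Matrix.nonsing_inv_mul _ hSunit,
                Matrix.one_mul, Matrix.mul_one]
      rw [Matrix.mul_add, Matrix.add_mul, Matrix.mul_one, hSS, h2]
    obtain ⟨u, hu, hu1⟩ := det_one_add_psd hKpsd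
    have hfin : (M + P).det = ((c * u : ℝ) : ℂ) := by
      rw [hMP, Matrix.det_mul, Matrix.det_mul, hu]
      have h3 : S.det * (u : ℂ) * S.det = M.det * (u : ℂ) := by
        rw [← hSS, Matrix.det_mul]; ring
      rw [h3, hMc]
      push_cast
      ring
    rw [hfin, Complex.ofReal_re]
    calc c = c * 1 := (mul_one c).symm
      _ ≤ c * u := mul_le_mul_of_nonneg_left hu1 hc0

/-! ### positive definite facts -/

private lemma posDef_conj {α β : Type*} [Fintype α] [Fintype β] [DecidableEq α] [DecidableEq β]
    {M : Matrix α α ℂ} (hM : M.PosDef) (B : Matrix α β ℂ)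
    (hB : ∀ x : β → ℂ, x ≠ 0 → B *ᵥ x ≠ 0) : (Bᴴ * M * B).PosDef := by
  refine Matrix.PosDef.of_dotProduct_mulVec_pos
    (Matrix.isHermitian_conjTranspose_mul_mul B hM.1) fun x hx => ?_
  have := hM.dotProduct_mulVec_pos (hB x hx)
  simpa only [Matrix.star_mulVec, dotProduct_mulVec, Matrix.vecMul_vecMul] using this

private lemma hconj_posDef {k : ℕ} {h : Matrix (Fin k) (Fin k) ℂ} (hdet : IsUnit h.det) :
    (hᴴ * h).PosDef := by
  have h1 : hᴴ * h = hᴴ * 1 * h := by rw [Matrix.mul_one]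
  rw [h1]
  refine posDef_conj Matrix.PosDef.one h (fun x hx => ?_)
  have hinj : Function.Injective h.mulVec :=
    (Matrix.mulVec_injective_iff_isUnit).mpr ((Matrix.isUnit_iff_isUnit_det h).mpr hdet)
  intro h0
  exact hx (hinj (by rw [h0, Matrix.mulVec_zero]))

private lemma corner_posDef {j k : ℕ} (hjk : j ≤ k) {M : Matrix (Fin k) (Fin k) ℂ}
    (hM : M.PosDef) : (proj j k * M * (proj j k)ᴴ).PosDef := by
  have h1 : proj j k * M * (proj j k)ᴴ = ((proj j k)ᴴ)ᴴ * M * (proj j k)ᴴ := by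
    rw [Matrix.conjTranspose_conjTranspose]
  rw [h1]
  refine posDef_conj hM ((proj j k)ᴴ) (fun x hx => ?_)
  obtain ⟨i, hi⟩ := Function.ne_iff.mp hx
  intro h0
  apply hi
  have hcast : ((proj j k)ᴴ *ᵥ x) (Fin.castLE hjk i) = x i := by
    simp only [Matrix.mulVec, dotProduct, Matrix.conjTranspose_apply, proj,
      Matrix.of_apply]
    rw [Finset.sum_eq_single i]
    · simp
    · intro t _ ht
      have hne : ¬ ((t : ℕ) = (i : ℕ)) := fun hh => ht (Fin.ext hh)
      simp [hne]
    · intro hmem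
      exact absurd (Finset.mem_univ i) hmem
  rw [h0] at hcast
  simpa using hcast.symm

private lemma posDef_det_re_pos {α : Type*} [Fintype α] [DecidableEq α] {M : Matrix α α ℂ}
    (hM : M.PosDef) : 0 < M.det.re := by
  have := hM.det_pos
  rw [Complex.lt_def] at this
  simpa using this.1

/-! ### relDet facts -/

private lemma corner_det_re_nonneg {k : ℕ} {M : Matrix (Fin k) (Fin k) ℂ} (hM : M.PosSemidef)
    (j : Fin k) : 0 ≤ (proj ((j : ℕ) + 1) k * M * (proj ((j : ℕ) + 1) k)ᴴ).det.re :=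
  psd_det_re_nonneg (hM.mul_mul_conjTranspose_same _)

private lemma relDet_nonneg {k : ℕ} (a : Fin k → ℝ) {M : Matrix (Fin k) (Fin k) ℂ}
    (hM : M.PosSemidef) : 0 ≤ relDet a M :=
  Finset.prod_nonneg fun j _ => Real.rpow_nonneg (corner_det_re_nonneg hM j) _

private lemma relDet_pos_of_posDef {k : ℕ} (a : Fin k → ℝ) {M : Matrix (Fin k) (Fin k) ℂ}
    (hM : M.PosDef) : 0 < relDet a M :=
  Finset.prod_pos fun j _ =>
    Real.rpow_pos_of_pos (posDef_det_re_pos (corner_posDef j.2 hM)) _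

private lemma relDet_combo {k : ℕ} (a b : Fin k → ℝ) {t s : ℝ} (ht : 0 < t) (hs : 0 < s)
    (hΔa : ∀ j, 0 ≤ delta a j) (hΔb : ∀ j, 0 ≤ delta b j)
    {M : Matrix (Fin k) (Fin k) ℂ} (hM : M.PosSemidef) :
    relDet (fun l => t * a l + s * b l) M = (relDet a M) ^ t * (relDet b M) ^ s := by
  unfold relDet
  rw [← Real.finset_prod_rpow Finset.univ _
      (fun j _ => Real.rpow_nonneg (corner_det_re_nonneg hM j) _) t,
    ← Real.finset_prod_rpow Finset.univ _
      (fun j _ => Real.rpow_nonneg (corner_det_re_nonneg hM j) _) s,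
    ← Finset.prod_mul_distrib]
  refine Finset.prod_congr rfl fun j _ => ?_
  rw [delta_combo]
  exact rpow_combo (corner_det_re_nonneg hM j) (hΔa j) (hΔb j) ht hs

private lemma relDet_mono {k : ℕ} (q : Fin k → ℝ) (hq : ∀ j, 0 ≤ delta q j)
    {M N : Matrix (Fin k) (Fin k) ℂ} (hM : M.PosSemidef) (hD : (N - M).PosSemidef) :
    relDet q M ≤ relDet q N := by
  unfold relDet
  refine Finset.prod_le_prod
    (fun j _ => Real.rpow_nonneg (corner_det_re_nonneg hM j) _) (fun j _ => ?_)
  refine Real.rpow_le_rpow (corner_det_re_nonneg hM j) ?_ (hq j)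
  have hN : N = M + (N - M) := by abel
  have hsplit : proj ((j : ℕ) + 1) k * N * (proj ((j : ℕ) + 1) k)ᴴ
      = proj ((j : ℕ) + 1) k * M * (proj ((j : ℕ) + 1) k)ᴴ
        + proj ((j : ℕ) + 1) k * (N - M) * (proj ((j : ℕ) + 1) k)ᴴ := by
    rw [← Matrix.add_mul, ← Matrix.mul_add, ← hN]
  rw [hsplit]
  exact det_re_mono (hM.mul_mul_conjTranspose_same _) (hD.mul_mul_conjTranspose_same _)

/-! ### upper triangular and capacity basics -/

private lemma UT_one {k : ℕ} : UT (1 : Matrix (Fin k) (Fin k) ℂ) := fun i j hij =>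
  Matrix.one_apply_ne ((ne_of_lt hij).symm)

private lemma UT_mul {k : ℕ} {g h : Matrix (Fin k) (Fin k) ℂ} (hg : UT g) (hh : UT h) :
    UT (g * h) := by
  intro i j hij
  rw [Matrix.mul_apply]
  refine Finset.sum_eq_zero fun t _ => ?_
  rcases lt_or_ge t i with ht | ht
  · rw [hg i t ht, zero_mul]
  · rw [hh t j (lt_of_lt_of_le hij ht), mul_zero]

private lemma UT_diagonal {k : ℕ} (v : Fin k → ℂ) : UT (Matrix.diagonal v) := fun i j hij =>
  Matrix.diagonal_apply_ne v ((ne_of_lt hij).symm)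

private lemma cap_lowerBound {n m r : ℕ} (A : Fin r → Matrix (Fin m) (Fin n) ℂ)
    (p : Fin n → ℝ) (q : Fin m → ℝ) (hp0 : ∀ j, 0 ≤ p j) :
    ∀ x ∈ { x : ℝ | ∃ h : Matrix (Fin n) (Fin n) ℂ, IsUnit h.det ∧ UT h ∧
      x = relDet q (cpMap A (h * Matrix.diagonal (fun j => (p j : ℂ)) * hᴴ)) /
          relDet p (hᴴ * h) }, 0 ≤ x := by
  rintro x ⟨h, _, _, rfl⟩
  apply div_nonneg
  · exact relDet_nonneg q (cpMap_psd A ((diag_real_psd p hp0).mul_mul_conjTranspose_same h))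
  · exact relDet_nonneg p (Matrix.posSemidef_conjTranspose_mul_self h)

private lemma cap_setNonempty {n m r : ℕ} (A : Fin r → Matrix (Fin m) (Fin n) ℂ)
    (p : Fin n → ℝ) (q : Fin m → ℝ) :
    Set.Nonempty { x : ℝ | ∃ h : Matrix (Fin n) (Fin n) ℂ, IsUnit h.det ∧ UT h ∧
      x = relDet q (cpMap A (h * Matrix.diagonal (fun j => (p j : ℂ)) * hᴴ)) /
          relDet p (hᴴ * h) } :=
  ⟨_, ⟨1, by simp, UT_one, rfl⟩⟩

private lemma cap_le_elem {n m r : ℕ} (A : Fin r → Matrix (Fin m) (Fin n) ℂ)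
    (p : Fin n → ℝ) (q : Fin m → ℝ) (hp0 : ∀ j, 0 ≤ p j)
    {h : Matrix (Fin n) (Fin n) ℂ} (hdet : IsUnit h.det) (hut : UT h) :
    cap A p q ≤ relDet q (cpMap A (h * Matrix.diagonal (fun j => (p j : ℂ)) * hᴴ)) /
      relDet p (hᴴ * h) := by
  refine csInf_le ⟨0, cap_lowerBound A p q hp0⟩ ?_
  exact ⟨h, hdet, hut, rfl⟩

private lemma le_cap {n m r : ℕ} (A : Fin r → Matrix (Fin m) (Fin n) ℂ)
    (p : Fin n → ℝ) (q : Fin m → ℝ) {c : ℝ}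
    (hc : ∀ h : Matrix (Fin n) (Fin n) ℂ, IsUnit h.det → UT h →
      c ≤ relDet q (cpMap A (h * Matrix.diagonal (fun j => (p j : ℂ)) * hᴴ)) /
        relDet p (hᴴ * h)) :
    c ≤ cap A p q := by
  refine le_csInf (cap_setNonempty A p q) ?_
  rintro b ⟨h, hdet, hut, rfl⟩
  exact hc h hdet hut

private lemma cap_nonneg {n m r : ℕ} (A : Fin r → Matrix (Fin m) (Fin n) ℂ)
    (p : Fin n → ℝ) (q : Fin m → ℝ) (hp0 : ∀ j, 0 ≤ p j) : 0 ≤ cap A p q :=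
  le_csInf (cap_setNonempty A p q) (cap_lowerBound A p q hp0)

/-! ### entropy -/

private lemma exp_entropy_eq {k : ℕ} (a : Fin k → ℝ) (ha : ∀ l, 0 ≤ a l) :
    Real.exp (entropy a) = ∏ l, (a l) ^ (-(a l)) := by
  unfold entropy
  rw [← Finset.sum_neg_distrib, Real.exp_sum]
  refine Finset.prod_congr rfl fun l _ => ?_
  rcases (ha l).eq_or_lt with h0 | h0
  · rw [← h0]
    simp
  · rw [Real.rpow_def_of_pos h0]
    ring_nf

private lemma prod_rpow_self {k : ℕ} (x : Fin k → ℝ) (hx : ∀ l, 0 ≤ x l) :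
    (∏ l, (x l) ^ (x l)) = Real.exp (-(entropy x)) := by
  unfold entropy
  rw [neg_neg, Real.exp_sum]
  refine Finset.prod_congr rfl fun l _ => ?_
  rcases (hx l).eq_or_lt with h0 | h0
  · rw [← h0]
    simp
  · rw [Real.rpow_def_of_pos h0]
    ring_nf

/-! ### the key capacity bound -/

private lemma key_bound {n m r : ℕ} (A : Fin r → Matrix (Fin m) (Fin n) ℂ)
    (p : Fin n → ℝ) (q : Fin m → ℝ) (hp0 : ∀ l, 0 ≤ p l) (hΔq : ∀ i, 0 ≤ delta q i)
    (x : Fin n → ℝ) (hx0 : ∀ l, 0 ≤ x l) (hxp : ∀ l, 0 < p l → 0 < x l)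
    {h : Matrix (Fin n) (Fin n) ℂ} (hdet : IsUnit h.det) (hut : UT h) :
    Real.exp (entropy p) * cap A p q ≤
      relDet q (cpMap A (h * Matrix.diagonal (fun l => (x l : ℂ)) * hᴴ)) /
        (relDet p (hᴴ * h) * ∏ l, x l ^ (p l)) := by
  classical
  set d : Fin n → ℝ := fun l => if p l = 0 then 1 else Real.sqrt (x l / p l) with hd_def
  have hd : ∀ l, 0 < d l := by
    intro l
    rw [hd_def]
    dsimp only
    split
    · exact one_pos
    · rename_i hne
      have hpp : 0 < p l := lt_of_le_of_ne (hp0 l) (Ne.symm hne)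
      exact Real.sqrt_pos.mpr (div_pos (hxp l hpp) hpp)
  set y : Fin n → ℝ := fun l => d l ^ 2 * p l with hy_def
  have hy_eq : ∀ l, y l = if p l = 0 then 0 else x l := by
    intro l
    rw [hy_def, hd_def]
    dsimp only
    split
    · rename_i hpz; rw [hpz, mul_zero]
    · rename_i hne
      have hpp : 0 < p l := lt_of_le_of_ne (hp0 l) (Ne.symm hne)
      rw [Real.sq_sqrt (le_of_lt (div_pos (hxp l hpp) hpp)), div_mul_cancel₀ _ hpp.ne']
  have hy0 : ∀ l, 0 ≤ y l := by
    intro l; rw [hy_eq l]; split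
    · exact le_rfl
    · exact hx0 l
  have hyx : ∀ l, y l ≤ x l := by
    intro l; rw [hy_eq l]; split
    · exact hx0 l
    · exact le_rfl
  have hDH : (Matrix.diagonal (fun l => (d l : ℂ)))ᴴ = Matrix.diagonal (fun l => (d l : ℂ)) := by
    rw [Matrix.diagonal_conjTranspose]
    have hstar : (star fun l => ((d l : ℝ) : ℂ)) = fun l => ((d l : ℝ) : ℂ) := by
      funext l
      rw [Pi.star_apply, Complex.star_def, Complex.conj_ofReal]
    rw [hstar]
  have hdet' : IsUnit (h * Matrix.diagonal (fun l => (d l : ℂ))).det := by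
    rw [Matrix.det_mul, Matrix.det_diagonal]
    refine hdet.mul (isUnit_iff_ne_zero.mpr ?_)
    refine Finset.prod_ne_zero_iff.mpr fun l _ => ?_
    exact Complex.ofReal_ne_zero.mpr (hd l).ne'
  have hut' : UT (h * Matrix.diagonal (fun l => (d l : ℂ))) := UT_mul hut (UT_diagonal _)
  have hE1 : (h * Matrix.diagonal (fun l => (d l : ℂ))) * Matrix.diagonal (fun l => (p l : ℂ))
        * (h * Matrix.diagonal (fun l => (d l : ℂ)))ᴴ
      = h * Matrix.diagonal (fun l => (y l : ℂ)) * hᴴ := by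
    rw [Matrix.conjTranspose_mul, hDH]
    calc h * Matrix.diagonal (fun l => (d l : ℂ)) * Matrix.diagonal (fun l => (p l : ℂ))
          * (Matrix.diagonal (fun l => (d l : ℂ)) * hᴴ)
        = h * (Matrix.diagonal (fun l => (d l : ℂ)) * Matrix.diagonal (fun l => (p l : ℂ))
            * Matrix.diagonal (fun l => (d l : ℂ))) * hᴴ := by
          simp only [Matrix.mul_assoc]
      _ = h * Matrix.diagonal (fun l => (y l : ℂ)) * hᴴ := by
          rw [Matrix.diagonal_mul_diagonal, Matrix.diagonal_mul_diagonal]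
          congr 1
          congr 1
          funext l
          rw [hy_def]
          push_cast
          ring
  have hE2 : (h * Matrix.diagonal (fun l => (d l : ℂ)))ᴴ * (h * Matrix.diagonal (fun l => (d l : ℂ)))
      = Matrix.diagonal (fun l => (d l : ℂ)) * (hᴴ * h) * Matrix.diagonal (fun l => (d l : ℂ)) := by
    rw [Matrix.conjTranspose_mul, hDH]
    simp only [Matrix.mul_assoc]
  have hcap := cap_le_elem A p q hp0 hdet' hut'
  rw [hE1, hE2] at hcap
  have hpsd_hh : (hᴴ * h).PosSemidef := Matrix.posSemidef_conjTranspose_mul_self h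
  rw [relDet_conj_diag p d hd (hᴴ * h) (fun j => corner_det_re_nonneg hpsd_hh j)] at hcap
  have hCypsd : (cpMap A (h * Matrix.diagonal (fun l => (y l : ℂ)) * hᴴ)).PosSemidef :=
    cpMap_psd A ((diag_real_psd y hy0).mul_mul_conjTranspose_same h)
  have hdiff : ((cpMap A (h * Matrix.diagonal (fun l => (x l : ℂ)) * hᴴ))
      - (cpMap A (h * Matrix.diagonal (fun l => (y l : ℂ)) * hᴴ))).PosSemidef := by
    have hxy : Matrix.diagonal (fun l => (x l : ℂ))
        = Matrix.diagonal (fun l => (y l : ℂ))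
          + Matrix.diagonal (fun l => ((x l - y l : ℝ) : ℂ)) := by
      rw [Matrix.diagonal_add]
      congr 1
      funext l
      push_cast
      ring
    have hsum : cpMap A (h * Matrix.diagonal (fun l => (x l : ℂ)) * hᴴ)
        = cpMap A (h * Matrix.diagonal (fun l => (y l : ℂ)) * hᴴ)
          + cpMap A (h * Matrix.diagonal (fun l => ((x l - y l : ℝ) : ℂ)) * hᴴ) := by
      rw [hxy, Matrix.mul_add, Matrix.add_mul, cpMap_add]
    rw [hsum, add_sub_cancel_left]
    exact cpMap_psd A
      ((diag_real_psd _ (fun l => sub_nonneg.mpr (hyx l))).mul_mul_conjTranspose_same h)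
  have hNum : relDet q (cpMap A (h * Matrix.diagonal (fun l => (y l : ℂ)) * hᴴ))
      ≤ relDet q (cpMap A (h * Matrix.diagonal (fun l => (x l : ℂ)) * hᴴ)) :=
    relDet_mono q hΔq hCypsd hdiff
  have hR : 0 < relDet p (hᴴ * h) := relDet_pos_of_posDef p (hconj_posDef hdet)
  have hW : 0 < ∏ l, (d l ^ 2) ^ (p l) :=
    Finset.prod_pos fun l _ => Real.rpow_pos_of_pos (pow_pos (hd l) 2) _
  have hPp : 0 < ∏ l, (p l) ^ (p l) := by
    refine Finset.prod_pos fun l _ => ?_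
    rcases (hp0 l).eq_or_lt with h0 | h0
    · rw [← h0]; simp
    · exact Real.rpow_pos_of_pos h0 _
  have hWid : (∏ l, (d l ^ 2) ^ (p l)) * (∏ l, (p l) ^ (p l)) = ∏ l, x l ^ (p l) := by
    rw [← Finset.prod_mul_distrib]
    refine Finset.prod_congr rfl fun l _ => ?_
    rcases eq_or_ne (p l) 0 with hpz | hpz
    · rw [hpz]; simp
    · have hpp : 0 < p l := lt_of_le_of_ne (hp0 l) (Ne.symm hpz)
      have hd2 : d l ^ 2 = x l / p l := by
        rw [hd_def]
        dsimp only
        rw [if_neg hpz, Real.sq_sqrt (div_nonneg (hx0 l) (hp0 l))]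
      rw [hd2, ← Real.mul_rpow (div_nonneg (hx0 l) (hp0 l)) (hp0 l),
        div_mul_cancel₀ _ hpp.ne']
  have hExp : Real.exp (entropy p) * (∏ l, (p l) ^ (p l)) = 1 := by
    rw [exp_entropy_eq p hp0, ← Finset.prod_mul_distrib]
    refine Finset.prod_eq_one fun l _ => ?_
    rcases eq_or_ne (p l) 0 with hpz | hpz
    · rw [hpz]; simp
    · have hpp : 0 < p l := lt_of_le_of_ne (hp0 l) (Ne.symm hpz)
      rw [← Real.rpow_add hpp, neg_add_cancel, Real.rpow_zero]
  have hEinv : Real.exp (entropy p) = (∏ l, (p l) ^ (p l))⁻¹ :=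
    eq_inv_of_mul_eq_one_left hExp
  calc Real.exp (entropy p) * cap A p q
      ≤ Real.exp (entropy p)
        * (relDet q (cpMap A (h * Matrix.diagonal (fun l => (y l : ℂ)) * hᴴ))
          / ((∏ l, (d l ^ 2) ^ (p l)) * relDet p (hᴴ * h))) :=
        mul_le_mul_of_nonneg_left hcap (Real.exp_nonneg _)
    _ ≤ Real.exp (entropy p)
        * (relDet q (cpMap A (h * Matrix.diagonal (fun l => (x l : ℂ)) * hᴴ))
          / ((∏ l, (d l ^ 2) ^ (p l)) * relDet p (hᴴ * h))) := by
        refine mul_le_mul_of_nonneg_left ?_ (Real.exp_nonneg _)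
        have hden : (0:ℝ) < (∏ l, (d l ^ 2) ^ (p l)) * relDet p (hᴴ * h) := mul_pos hW hR
        exact (div_le_div_iff_of_pos_right hden).mpr hNum
    _ = relDet q (cpMap A (h * Matrix.diagonal (fun l => (x l : ℂ)) * hᴴ))
        / (relDet p (hᴴ * h) * ∏ l, x l ^ (p l)) := by
        rw [hEinv, ← hWid]
        have hrw : relDet p (hᴴ * h) * ((∏ l, (d l ^ 2) ^ (p l)) * ∏ l, (p l) ^ (p l))
            = ((∏ l, (d l ^ 2) ^ (p l)) * relDet p (hᴴ * h)) * ∏ l, (p l) ^ (p l) := by ring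
        rw [hrw, ← div_div]
        ring

end Stmt15Aux

open scoped ComplexOrder

/-- Proposition (log-concavity): `f(p,q) = e^{H(p)} · cap(T, diag p, diag q)` is log-concave on
pairs of nonincreasing nonnegative vectors. -/
theorem stmt15 {n m r : ℕ} (A : Fin r → Matrix (Fin m) (Fin n) ℂ)
    (p p' : Fin n → ℝ) (q q' : Fin m → ℝ)
    (hp : Antitone p) (hp0 : ∀ j, 0 ≤ p j) (hp' : Antitone p') (hp'0 : ∀ j, 0 ≤ p' j)
    (hq : Antitone q) (hq0 : ∀ i, 0 ≤ q i) (hq' : Antitone q') (hq'0 : ∀ i, 0 ≤ q' i)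
    (t : ℝ) (ht0 : 0 ≤ t) (ht1 : t ≤ 1) :
    (Real.exp (entropy p) * cap A p q) ^ t *
        (Real.exp (entropy p') * cap A p' q') ^ (1 - t) ≤
      Real.exp (entropy (fun j => t * p j + (1 - t) * p' j)) *
        cap A (fun j => t * p j + (1 - t) * p' j) (fun i => t * q i + (1 - t) * q' i) := by
  rcases eq_or_lt_of_le ht0 with h0 | ht0'
  · subst h0
    have hpp : (fun j => (0:ℝ) * p j + (1 - 0) * p' j) = p' := by funext j; ring
    have hqq : (fun i => (0:ℝ) * q i + (1 - 0) * q' i) = q' := by funext i; ring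
    rw [hpp, hqq, Real.rpow_zero, sub_zero, Real.rpow_one, one_mul]
  rcases eq_or_lt_of_le ht1 with h1 | ht1'
  · subst h1
    have hpp : (fun j => (1:ℝ) * p j + (1 - 1) * p' j) = p := by funext j; ring
    have hqq : (fun i => (1:ℝ) * q i + (1 - 1) * q' i) = q := by funext i; ring
    rw [hpp, hqq, Real.rpow_one, sub_self, Real.rpow_zero, mul_one]
  have hs : 0 < 1 - t := by linarith
  set x : Fin n → ℝ := fun j => t * p j + (1 - t) * p' j with hx_def
  set qt : Fin m → ℝ := fun i => t * q i + (1 - t) * q' i with hqt_def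
  have hx0 : ∀ l, 0 ≤ x l := by
    intro l
    rw [hx_def]
    dsimp only
    nlinarith [hp0 l, hp'0 l]
  have hΔq : ∀ i, 0 ≤ delta q i := delta_nonneg' hq hq0
  have hΔq' : ∀ i, 0 ≤ delta q' i := delta_nonneg' hq' hq'0
  have hΔp : ∀ j, 0 ≤ delta p j := delta_nonneg' hp hp0
  have hΔp' : ∀ j, 0 ≤ delta p' j := delta_nonneg' hp' hp'0
  have hxp : ∀ l, 0 < p l → 0 < x l := by
    intro l hl
    rw [hx_def]
    dsimp only
    nlinarith [hp'0 l]
  have hxp' : ∀ l, 0 < p' l → 0 < x l := by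
    intro l hl
    rw [hx_def]
    dsimp only
    nlinarith [hp0 l]
  have hEx : (0:ℝ) < Real.exp (entropy x) := Real.exp_pos _
  have hstep : ∀ h : Matrix (Fin n) (Fin n) ℂ, IsUnit h.det → UT h →
      (Real.exp (entropy p) * cap A p q) ^ t * (Real.exp (entropy p') * cap A p' q') ^ (1 - t)
          * (Real.exp (entropy x))⁻¹
        ≤ relDet qt (cpMap A (h * Matrix.diagonal (fun j => (x j : ℂ)) * hᴴ)) /
            relDet x (hᴴ * h) := by
    intro h hdet hut
    set C := cpMap A (h * Matrix.diagonal (fun j => (x j : ℂ)) * hᴴ) with hC_def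
    have hCpsd : C.PosSemidef :=
      cpMap_psd A ((diag_real_psd x hx0).mul_mul_conjTranspose_same h)
    have hk1 := key_bound A p q hp0 hΔq x hx0 hxp hdet hut
    have hk2 := key_bound A p' q' hp'0 hΔq' x hx0 hxp' hdet hut
    have hR : 0 < relDet p (hᴴ * h) := relDet_pos_of_posDef p (hconj_posDef hdet)
    have hR' : 0 < relDet p' (hᴴ * h) := relDet_pos_of_posDef p' (hconj_posDef hdet)
    have hRt : 0 < relDet x (hᴴ * h) := relDet_pos_of_posDef x (hconj_posDef hdet)
    have hP1 : 0 < ∏ l, x l ^ (p l) := by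
      refine Finset.prod_pos fun l _ => ?_
      rcases (hp0 l).eq_or_lt with hz | hz
      · rw [← hz]; simp
      · exact Real.rpow_pos_of_pos (hxp l hz) _
    have hP2 : 0 < ∏ l, x l ^ (p' l) := by
      refine Finset.prod_pos fun l _ => ?_
      rcases (hp'0 l).eq_or_lt with hz | hz
      · rw [← hz]; simp
      · exact Real.rpow_pos_of_pos (hxp' l hz) _
    have hN1 : 0 ≤ relDet q C := relDet_nonneg q hCpsd
    have hN2 : 0 ≤ relDet q' C := relDet_nonneg q' hCpsd
    have hlhs1 : 0 ≤ Real.exp (entropy p) * cap A p q :=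
      mul_nonneg (Real.exp_nonneg _) (cap_nonneg A p q hp0)
    have hlhs2 : 0 ≤ Real.exp (entropy p') * cap A p' q' :=
      mul_nonneg (Real.exp_nonneg _) (cap_nonneg A p' q' hp'0)
    have hmono : (Real.exp (entropy p) * cap A p q) ^ t
        * (Real.exp (entropy p') * cap A p' q') ^ (1 - t)
        ≤ (relDet q C / (relDet p (hᴴ * h) * ∏ l, x l ^ (p l))) ^ t
          * (relDet q' C / (relDet p' (hᴴ * h) * ∏ l, x l ^ (p' l))) ^ (1 - t) :=
      mul_le_mul (Real.rpow_le_rpow hlhs1 hk1 ht0'.le)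
        (Real.rpow_le_rpow hlhs2 hk2 hs.le)
        (Real.rpow_nonneg hlhs2 _)
        (Real.rpow_nonneg (div_nonneg hN1 (mul_pos hR hP1).le) _)
    have hqcombo : relDet qt C = (relDet q C) ^ t * (relDet q' C) ^ (1 - t) := by
      rw [hqt_def]
      exact relDet_combo q q' ht0' hs hΔq hΔq' hCpsd
    have hpcombo : relDet x (hᴴ * h)
        = (relDet p (hᴴ * h)) ^ t * (relDet p' (hᴴ * h)) ^ (1 - t) := by
      rw [hx_def]
      exact relDet_combo p p' ht0' hs hΔp hΔp' (Matrix.posSemidef_conjTranspose_mul_self h)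
    have hxcombo : (∏ l, x l ^ (p l)) ^ t * (∏ l, x l ^ (p' l)) ^ (1 - t)
        = Real.exp (-(entropy x)) := by
      rw [← Real.finset_prod_rpow Finset.univ _ (fun l _ => Real.rpow_nonneg (hx0 l) _) t,
        ← Real.finset_prod_rpow Finset.univ _ (fun l _ => Real.rpow_nonneg (hx0 l) _) (1 - t),
        ← Finset.prod_mul_distrib, ← prod_rpow_self x hx0]
      refine Finset.prod_congr rfl fun l _ => ?_
      rw [← rpow_combo (hx0 l) (hp0 l) (hp'0 l) ht0' hs]
    have hsplit : (relDet q C / (relDet p (hᴴ * h) * ∏ l, x l ^ (p l))) ^ t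
          * (relDet q' C / (relDet p' (hᴴ * h) * ∏ l, x l ^ (p' l))) ^ (1 - t)
        = relDet qt C / (relDet x (hᴴ * h) * Real.exp (-(entropy x))) := by
      rw [Real.div_rpow hN1 (mul_pos hR hP1).le, Real.div_rpow hN2 (mul_pos hR' hP2).le,
        div_mul_div_comm, ← hqcombo,
        Real.mul_rpow hR.le hP1.le, Real.mul_rpow hR'.le hP2.le]
      congr 1
      rw [hpcombo, ← hxcombo]
      ring
    have hle : (Real.exp (entropy p) * cap A p q) ^ t
        * (Real.exp (entropy p') * cap A p' q') ^ (1 - t)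
        ≤ (relDet qt C / relDet x (hᴴ * h)) * Real.exp (entropy x) := by
      refine le_trans hmono (le_of_eq ?_)
      rw [hsplit, Real.exp_neg]
      field_simp
    calc (Real.exp (entropy p) * cap A p q) ^ t
          * (Real.exp (entropy p') * cap A p' q') ^ (1 - t) * (Real.exp (entropy x))⁻¹
        ≤ ((relDet qt C / relDet x (hᴴ * h)) * Real.exp (entropy x))
            * (Real.exp (entropy x))⁻¹ :=
          mul_le_mul_of_nonneg_right hle (inv_nonneg.mpr hEx.le)
      _ = relDet qt C / relDet x (hᴴ * h) := by
          field_simp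
  have hcap := le_cap A x qt hstep
  calc (Real.exp (entropy p) * cap A p q) ^ t
        * (Real.exp (entropy p') * cap A p' q') ^ (1 - t)
      = ((Real.exp (entropy p) * cap A p q) ^ t
          * (Real.exp (entropy p') * cap A p' q') ^ (1 - t)
          * (Real.exp (entropy x))⁻¹) * Real.exp (entropy x) := by
        field_simp
    _ ≤ cap A x qt * Real.exp (entropy x) :=
        mul_le_mul_of_nonneg_right hcap hEx.le
    _ = Real.exp (entropy x) * cap A x qt := mul_comm _ _
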